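/- arXiv:1602.08379 — 2 statements merged into one kernel-verified Lean document; each statement's English description precedes it below -/
import Mathlib

section
/- Let N be any group and φ an automorphism of N. Consider the double A = (N ⋊_φ ⟨t₁⟩) *_N (N ⋊_φ ⟨t₂⟩) of N ⋊_φ ℤ along N, and the group B = (N ⋊_φ ⟨t⟩) × F₂ where F₂ = ⟨u, v⟩ is free of rank 2. Then the map sending N identically to N ≤ N ⋊ ⟨t⟩, t₁ ↦ tu, and t₂ ↦ tv extends to an injective group homomorphism A → B. -/
open Monoid SemidirectProduct

namespace BieriAux

/-- The subgroup of elements `g` for which the semidirect-product lift compatibility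
condition holds. -/
def compatSubgroup {M G A : Type} [Group M] [Group G] [Group A]
    (α : G →* MulAut M) (F₁ : M →* A) (F₂ : G →* A) : Subgroup G where
  carrier := {g | ∀ n, F₁ (α g n) = F₂ g * F₁ n * (F₂ g)⁻¹}
  one_mem' := by simp
  mul_mem' := by
    intro a b ha hb n
    simp only [map_mul, MulAut.mul_apply, mul_inv_rev]
    rw [ha, hb]
    group
  inv_mem' := by
    intro a ha n
    have h := ha ((α a)⁻¹ n)
    have h2 : (α a) ((α a)⁻¹ n) = n := by simp
    rw [h2] at h
    rw [map_inv, map_inv]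
    have : F₁ ((α a)⁻¹ n) = (F₂ a)⁻¹ * F₁ n * F₂ a := by
      rw [h]; group
    rw [this]; group

lemma compat_of_top {M G A : Type} [Group M] [Group G] [Group A]
    {α : G →* MulAut M} {F₁ : M →* A} {F₂ : G →* A}
    (htop : compatSubgroup α F₁ F₂ = ⊤) (g : G) :
    F₁.comp (α g).toMonoidHom = (MulAut.conj (F₂ g)).toMonoidHom.comp F₁ := by
  refine MonoidHom.ext fun n => ?_
  have hg : g ∈ compatSubgroup α F₁ F₂ := htop ▸ Subgroup.mem_top g
  simpa [MulAut.conj_apply] using hg n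

lemma compat_top_of_freeGroup {M A β : Type} [Group M] [Group A]
    {α : FreeGroup β →* MulAut M} {F₁ : M →* A} {F₂ : FreeGroup β →* A}
    (h : ∀ b : β, ∀ n, F₁ (α (FreeGroup.of b) n) =
      F₂ (FreeGroup.of b) * F₁ n * (F₂ (FreeGroup.of b))⁻¹) :
    compatSubgroup α F₁ F₂ = ⊤ := by
  rw [← FreeGroup.closure_range_of β]
  rw [eq_comm]
  apply Subgroup.closure_eq_of_le
  · rintro x ⟨b, rfl⟩
    exact h b
  · rw [FreeGroup.closure_range_of β]; exact le_top

lemma compat_top_of_mint {M A : Type} [Group M] [Group A]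
    {α : Multiplicative ℤ →* MulAut M} {F₁ : M →* A} {F₂ : Multiplicative ℤ →* A}
    (h : ∀ n, F₁ (α (Multiplicative.ofAdd 1) n) =
      F₂ (Multiplicative.ofAdd 1) * F₁ n * (F₂ (Multiplicative.ofAdd 1))⁻¹) :
    compatSubgroup α F₁ F₂ = ⊤ := by
  rw [eq_top_iff]
  intro g _
  have : g ∈ Subgroup.zpowers (Multiplicative.ofAdd (1 : ℤ)) := by
    refine ⟨Multiplicative.toAdd g, ?_⟩
    simp [← ofAdd_zsmul]
  rcases this with ⟨k, rfl⟩
  have h1 : Multiplicative.ofAdd (1 : ℤ) ∈ compatSubgroup α F₁ F₂ := h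
  exact Subgroup.zpow_mem _ h1 k

variable (N : Type) [Group N] (φ : MulAut N)

/-- `H = N ⋊_φ ℤ`. -/
abbrev Hgrp := N ⋊[zpowersHom (MulAut N) φ] Multiplicative ℤ

/-- Action of `F₂` on `N` where every generator acts by `φ`. -/
def act : FreeGroup Bool →* MulAut N := FreeGroup.lift fun _ => φ

@[simp] lemma act_of (b : Bool) : act N φ (FreeGroup.of b) = φ :=
  FreeGroup.lift_apply_of

/-- `K = N ⋊ F₂`. -/
abbrev Kgrp := N ⋊[act N φ] FreeGroup Bool

/-- In `H`, conjugation by `t` is `φ`. -/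
lemma t_inl_t (n : N) :
    (SemidirectProduct.inl (φ n) : Hgrp N φ) =
      SemidirectProduct.inr (Multiplicative.ofAdd (1 : ℤ)) * SemidirectProduct.inl n *
        (SemidirectProduct.inr (Multiplicative.ofAdd (1 : ℤ)))⁻¹ := by
  have := SemidirectProduct.inl_aut (φ := zpowersHom (MulAut N) φ)
    (Multiplicative.ofAdd (1 : ℤ)) n
  simp only [zpowersHom_apply, toAdd_ofAdd, zpow_one, map_inv] at this
  exact this

/-- Map `H →* K` sending `N` identically and `t ↦ inr (of b)`. -/
def psi (b : Bool) : Hgrp N φ →* Kgrp N φ :=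
  SemidirectProduct.lift SemidirectProduct.inl
    (zpowersHom (Kgrp N φ) (SemidirectProduct.inr (FreeGroup.of b)))
    (compat_of_top (compat_top_of_mint (by
      intro n
      have := SemidirectProduct.inl_aut (φ := act N φ) (FreeGroup.of b) n
      simp only [act_of, map_inv] at this
      simpa using this)))

@[simp] lemma psi_inl (b : Bool) (n : N) :
    psi N φ b (SemidirectProduct.inl n) = SemidirectProduct.inl n :=
  SemidirectProduct.lift_inl _ _ _ _

@[simp] lemma psi_t (b : Bool) :
    psi N φ b (SemidirectProduct.inr (Multiplicative.ofAdd (1 : ℤ))) =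
      SemidirectProduct.inr (FreeGroup.of b) := by
  rw [psi, SemidirectProduct.lift_inr, zpowersHom_apply]
  simp

/-- index `i : Fin 2` to boolean generator -/
def tob : Fin 2 → Bool := fun i => i = 0

/-- boolean generator to index -/
def toFin : Bool → Fin 2 := fun b => if b then 0 else 1

@[simp] lemma toFin_tob (i : Fin 2) : toFin (tob i) = i := by
  fin_cases i <;> rfl

abbrev fam : Fin 2 → (N →* Hgrp N φ) := fun _ => SemidirectProduct.inl

/-- The map from the pushout to `K`. -/
def fA : PushoutI (fam N φ) →* Kgrp N φ :=
  PushoutI.lift (fun i => psi N φ (tob i)) SemidirectProduct.inl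
    (fun i => show (psi N φ (tob i)).comp (fam N φ i) = SemidirectProduct.inl from
      SemidirectProduct.lift_comp_inl _ _ _)

/-- `of i (inl n) = base n` in the pushout. -/
lemma of_inl (i : Fin 2) (n : N) :
    PushoutI.of (φ := fam N φ) i (SemidirectProduct.inl n) = PushoutI.base (fam N φ) n :=
  DFunLike.congr_fun (PushoutI.of_comp_eq_base (φ := fam N φ) i) n

/-- generator map for the retraction -/
def gGen : FreeGroup Bool →* PushoutI (fam N φ) :=
  FreeGroup.lift fun b =>
    PushoutI.of (φ := fam N φ) (toFin b) (SemidirectProduct.inr (Multiplicative.ofAdd (1 : ℤ)))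

/-- The retraction `K →* PushoutI`. -/
def gA : Kgrp N φ →* PushoutI (fam N φ) :=
  SemidirectProduct.lift ((PushoutI.of (φ := fam N φ) 0).comp SemidirectProduct.inl)
    (gGen N φ)
    (compat_of_top (compat_top_of_freeGroup (by
      intro b n
      simp only [MonoidHom.comp_apply, act_of, gGen, FreeGroup.lift_apply_of]
      rw [of_inl N φ 0 (φ n), of_inl N φ 0 n, ← of_inl N φ (toFin b) (φ n),
        ← of_inl N φ (toFin b) n, t_inl_t, map_mul, map_mul, map_inv])))

lemma gA_comp_fA : (gA N φ).comp (fA N φ) = MonoidHom.id _ := by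
  apply PushoutI.hom_ext
  · intro i
    apply SemidirectProduct.hom_ext
    · refine MonoidHom.ext fun n => ?_
      simp only [MonoidHom.comp_apply, MonoidHom.id_apply, fA, PushoutI.lift_of, psi_inl]
      rw [gA, SemidirectProduct.lift_inl]
      simp only [MonoidHom.comp_apply]
      rw [of_inl N φ 0, of_inl N φ i]
    · apply MonoidHom.ext_mint
      simp only [MonoidHom.comp_apply, MonoidHom.id_apply, fA, PushoutI.lift_of, psi_t]
      rw [gA, SemidirectProduct.lift_inr]
      simp [gGen, FreeGroup.lift_apply_of, toFin_tob]
  · refine MonoidHom.ext fun n => ?_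
    simp only [MonoidHom.comp_apply, MonoidHom.id_apply, PushoutI.lift_base, fA]
    rw [gA, SemidirectProduct.lift_inl]
    simp only [MonoidHom.comp_apply]
    rw [of_inl N φ 0]

lemma fA_injective : Function.Injective (fA N φ) := by
  intro x y hxy
  have h1 := DFunLike.congr_fun (gA_comp_fA N φ) x
  have h2 := DFunLike.congr_fun (gA_comp_fA N φ) y
  simp only [MonoidHom.comp_apply, MonoidHom.id_apply] at h1 h2
  rw [← h1, ← h2, hxy]

/-- The injection `K →* H × F₂`. -/
def jB : Kgrp N φ →* Hgrp N φ × FreeGroup Bool :=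
  SemidirectProduct.lift
    (MonoidHom.prod SemidirectProduct.inl 1)
    (FreeGroup.lift fun b =>
      ((SemidirectProduct.inr (Multiplicative.ofAdd (1 : ℤ)) : Hgrp N φ), FreeGroup.of b))
    (compat_of_top (compat_top_of_freeGroup (by
      intro b n
      simp only [MonoidHom.prod_apply, act_of, FreeGroup.lift_apply_of, MonoidHom.one_apply,
        Prod.mk_mul_mk, Prod.inv_mk, mul_one, one_mul, inv_one]
      refine Prod.ext ?_ (by simp)
      simpa using t_inl_t N φ n)))

@[simp] lemma jB_inl (n : N) :
    jB N φ (SemidirectProduct.inl n) = (SemidirectProduct.inl n, 1) := by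
  rw [jB, SemidirectProduct.lift_inl]
  rfl

@[simp] lemma jB_inr_of (b : Bool) :
    jB N φ (SemidirectProduct.inr (FreeGroup.of b)) =
      ((SemidirectProduct.inr (Multiplicative.ofAdd (1 : ℤ)) : Hgrp N φ), FreeGroup.of b) := by
  rw [jB, SemidirectProduct.lift_inr, FreeGroup.lift_apply_of]

lemma snd_comp_jB : (MonoidHom.snd (Hgrp N φ) (FreeGroup Bool)).comp (jB N φ) =
    SemidirectProduct.rightHom := by
  apply SemidirectProduct.hom_ext
  · refine MonoidHom.ext fun n => ?_
    simp
  · apply FreeGroup.ext_hom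
    intro b
    simp

lemma jB_injective : Function.Injective (jB N φ) := by
  intro x y hxy
  have hsnd : x.right = y.right := by
    have h1 := DFunLike.congr_fun (snd_comp_jB N φ) x
    have h2 := DFunLike.congr_fun (snd_comp_jB N φ) y
    simp only [MonoidHom.comp_apply] at h1 h2
    rw [SemidirectProduct.rightHom_eq_right] at h1 h2
    rw [← h1, ← h2, hxy]
  rcases x with ⟨n, w⟩
  rcases y with ⟨m, w'⟩
  have hw : w = w' := hsnd
  subst hw
  have hx : (⟨n, w⟩ : Kgrp N φ) = SemidirectProduct.inl n * SemidirectProduct.inr w :=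
    (SemidirectProduct.inl_left_mul_inr_right _).symm
  have hy : (⟨m, w⟩ : Kgrp N φ) = SemidirectProduct.inl m * SemidirectProduct.inr w :=
    (SemidirectProduct.inl_left_mul_inr_right _).symm
  rw [hx, hy, map_mul, map_mul] at hxy
  have hmul : jB N φ (SemidirectProduct.inl n) = jB N φ (SemidirectProduct.inl m) :=
    mul_right_cancel hxy
  rw [jB_inl, jB_inl] at hmul
  have : (SemidirectProduct.inl n : Hgrp N φ) = SemidirectProduct.inl m :=
    congrArg Prod.fst hmul
  rw [SemidirectProduct.inl_injective this]

end BieriAux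

open BieriAux in
/-- Let `N` be a group with automorphism `φ`.  The double
`A = (N ⋊_φ ⟨t₁⟩) *_N (N ⋊_φ ⟨t₂⟩)` of `N ⋊_φ ℤ` along `N` embeds into
`B = (N ⋊_φ ⟨t⟩) × F₂`, where `F₂ = ⟨u, v⟩` is free of rank 2, via the map sending
`N` identically to `N`, `t₁ ↦ tu`, and `t₂ ↦ tv`. -/
theorem bieri_double_embedding
    (N : Type) [Group N] (φ : MulAut N) :
    letI H := N ⋊[zpowersHom (MulAut N) φ] Multiplicative ℤ
    letI t : H := SemidirectProduct.inr (Multiplicative.ofAdd (1 : ℤ))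
    ∃ Φ : Monoid.PushoutI (fun _ : Fin 2 => (SemidirectProduct.inl : N →* H)) →*
        H × FreeGroup Bool,
      Function.Injective Φ ∧
      (∀ (i : Fin 2) (n : N),
        Φ (Monoid.PushoutI.of (φ := fun _ : Fin 2 => (SemidirectProduct.inl : N →* H)) i
            (SemidirectProduct.inl n)) = (SemidirectProduct.inl n, 1)) ∧
      Φ (Monoid.PushoutI.of (φ := fun _ : Fin 2 => (SemidirectProduct.inl : N →* H)) 0 t) =
          (t, FreeGroup.of true) ∧
      Φ (Monoid.PushoutI.of (φ := fun _ : Fin 2 => (SemidirectProduct.inl : N →* H)) 1 t) =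
          (t, FreeGroup.of false) := by
  refine ⟨(jB N φ).comp (fA N φ), (jB_injective N φ).comp (fA_injective N φ), ?_, ?_, ?_⟩
  · intro i n
    simp only [MonoidHom.comp_apply, fA, PushoutI.lift_of, psi_inl, jB_inl]
  · simp only [MonoidHom.comp_apply, fA, PushoutI.lift_of, psi_t, jB_inr_of]
    rfl
  · simp only [MonoidHom.comp_apply, fA, PushoutI.lift_of, psi_t, jB_inr_of]
    rfl
end

section
/- Let φ(x) = xyx, φ(y) = x in the free group ⟨x,y⟩, and assign weights d₁ = 1+√2 to x^{±1} and d₂ = 1 to y^{±1}, giving weighted length ‖w‖ = d₁|w|_x + d₂|w|_y. Then for every freely reduced word w, the freely reduced representative v of φ(w) satisfies ‖v‖ = (1+√2)·‖w‖ whenever w is a positive word (no free reduction occurs), and in general ‖v‖ ≤ (1+√2)·‖w‖. -/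
/-- A letter of a word in `⟨x,y⟩`: first component the generator (`true` = `x`,
`false` = `y`), second component the sign. -/
abbrev Letter := Bool × Bool

/-- The formal inverse of a word. -/
def invWord (w : List Letter) : List Letter :=
  (w.map fun p => (p.1, !p.2)).reverse

/-- Substitution of the words `fx`, `fy` for the letters `x^{±1}`, `y^{±1}`. -/
def substWord (fx fy : List Letter) (w : List Letter) : List Letter :=
  (w.map fun p =>
    if p.2 then (if p.1 then fx else fy) else invWord (if p.1 then fx else fy)).flatten

/-- The number of occurrences of `x^{±1}` in a word. -/
def countX (w : List Letter) : ℕ := (w.filter fun p => p.1).length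

/-- The number of occurrences of `y^{±1}` in a word. -/
def countY (w : List Letter) : ℕ := (w.filter fun p => !p.1).length

/-- The weighted length with weight `d₁` on `x^{±1}` and `d₂` on `y^{±1}`. -/
def wlen (d₁ d₂ : ℝ) (w : List Letter) : ℝ := d₁ * countX w + d₂ * countY w

/-- The word `φ(x) = xyx`. -/
def phiX : List Letter := [(true, true), (false, true), (true, true)]

/-- The word `φ(y) = x`. -/
def phiY : List Letter := [(true, true)]

/-- A word is positive if it has no occurrences of `x⁻¹` or `y⁻¹`. -/
def PositiveWord (w : List Letter) : Prop := ∀ p ∈ w, p.2 = true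

lemma countX_subst (w : List Letter) :
    countX (substWord phiX phiY w) = 2 * countX w + countY w := by
  induction w with
  | nil => rfl
  | cons p w ih =>
    obtain ⟨b₁, b₂⟩ := p
    cases b₁ <;> cases b₂ <;>
      simp [substWord, countX, countY, invWord, phiX, phiY] at ih ⊢ <;> omega

lemma countY_subst (w : List Letter) :
    countY (substWord phiX phiY w) = countX w := by
  induction w with
  | nil => rfl
  | cons p w ih =>
    obtain ⟨b₁, b₂⟩ := p
    cases b₁ <;> cases b₂ <;>
      simp [substWord, countX, countY, invWord, phiX, phiY] at ih ⊢ <;> omega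

lemma positive_subst (w : List Letter) (hw : PositiveWord w) :
    PositiveWord (substWord phiX phiY w) := by
  intro p hp
  simp only [substWord, List.mem_flatten, List.mem_map] at hp
  obtain ⟨l, ⟨q, hq, rfl⟩, hpl⟩ := hp
  rw [hw q hq] at hpl
  simp only [if_true] at hpl
  split at hpl <;> simp [phiX, phiY] at hpl <;> first
    | (rcases hpl with h | h | h <;> simp [h])
    | simp [hpl]

lemma positive_reduce (w : List Letter) (hw : PositiveWord w) :
    FreeGroup.reduce w = w := by
  induction w with
  | nil => rfl
  | cons p w ih =>
    rw [FreeGroup.reduce.cons, ih (fun q hq => hw q (List.mem_cons_of_mem _ hq))]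
    cases w with
    | nil => rfl
    | cons q w =>
      have hp := hw p (List.mem_cons_self)
      have hq := hw q (List.mem_cons_of_mem _ (List.mem_cons_self))
      simp [hp, hq]

lemma wlen_subst (w : List Letter) :
    wlen (1 + Real.sqrt 2) 1 (substWord phiX phiY w) =
      (1 + Real.sqrt 2) * wlen (1 + Real.sqrt 2) 1 w := by
  have h2 : Real.sqrt 2 * Real.sqrt 2 = 2 :=
    Real.mul_self_sqrt (by norm_num)
  simp only [wlen, countX_subst, countY_subst]
  push_cast
  ring_nf
  nlinarith [h2]

/-- For `φ(x) = xyx`, `φ(y) = x` and weights `d₁ = 1+√2`, `d₂ = 1`: for every freely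
reduced word `w`, the freely reduced representative `v` of `φ(w)` satisfies
`‖v‖ = (1+√2)·‖w‖` when `w` is positive (no free reduction occurs), and in general
`‖v‖ ≤ (1+√2)·‖w‖`. -/
theorem weighted_length_phi (w : List Letter) (hw : FreeGroup.reduce w = w) :
    (PositiveWord w →
      FreeGroup.reduce (substWord phiX phiY w) = substWord phiX phiY w ∧
      wlen (1 + Real.sqrt 2) 1 (FreeGroup.reduce (substWord phiX phiY w)) =
        (1 + Real.sqrt 2) * wlen (1 + Real.sqrt 2) 1 w) ∧
    wlen (1 + Real.sqrt 2) 1 (FreeGroup.reduce (substWord phiX phiY w)) ≤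
      (1 + Real.sqrt 2) * wlen (1 + Real.sqrt 2) 1 w := by
  have h0 : (0:ℝ) ≤ 1 + Real.sqrt 2 := by positivity
  constructor
  · intro hpos
    have hr := positive_reduce _ (positive_subst w hpos)
    exact ⟨hr, by rw [hr, wlen_subst]⟩
  · have hsub : (FreeGroup.reduce (substWord phiX phiY w)).Sublist (substWord phiX phiY w) :=
      (FreeGroup.reduce.red (L := substWord phiX phiY w)).sublist
    have hx : countX (FreeGroup.reduce (substWord phiX phiY w)) ≤
        countX (substWord phiX phiY w) :=
      List.Sublist.length_le (List.Sublist.filter _ hsub)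
    have hy : countY (FreeGroup.reduce (substWord phiX phiY w)) ≤
        countY (substWord phiX phiY w) :=
      List.Sublist.length_le (List.Sublist.filter _ hsub)
    calc wlen (1 + Real.sqrt 2) 1 (FreeGroup.reduce (substWord phiX phiY w))
        ≤ wlen (1 + Real.sqrt 2) 1 (substWord phiX phiY w) := by
          unfold wlen
          have hx' : (countX (FreeGroup.reduce (substWord phiX phiY w)) : ℝ) ≤
              countX (substWord phiX phiY w) := Nat.cast_le.mpr hx
          have hy' : (countY (FreeGroup.reduce (substWord phiX phiY w)) : ℝ) ≤
              countY (substWord phiX phiY w) := Nat.cast_le.mpr hy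
          nlinarith
      _ = (1 + Real.sqrt 2) * wlen (1 + Real.sqrt 2) 1 w := wlen_subst w
end
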